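/- arXiv:1004.0944 — 3 statements merged into one kernel-verified Lean document; each statement's English description precedes it below -/
import Mathlib

section
/- (Podelski–Rybalchenko soundness) Let A, A' ∈ ℚ^{m×n} and b ∈ ℚ^m describe a loop by the constraint A x + A' x' ≤ b. If there exist nonnegative rational vectors λ₁, λ₂ ∈ ℚ₊^m satisfying λ₁ᵀ A' = 0, (λ₁ᵀ − λ₂ᵀ) A = 0, λ₂ᵀ (A + A') = 0, and λ₂ᵀ b < 0, then the function f(x) = λ₂ᵀ A' x satisfies, for all x, x' with A x + A' x' ≤ b: f(x) − f(x') ≥ −λ₂ᵀ b > 0 and f(x) ≥ −λ₁ᵀ b, i.e., f is a ranking function bounded below and decreasing by a fixed positive amount; consequently the loop terminates (no infinite transition sequence exists). -/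
open Matrix

/-- Podelski–Rybalchenko soundness: if nonnegative `λ₁, λ₂` satisfy the PR conditions
for the loop `A x + A' x' ≤ b`, then `f x = λ₂ᵀ A' x` is a ranking function bounded
below and decreasing by the fixed positive amount `−λ₂ᵀb`; hence the loop terminates. -/
theorem stmt_7 {m n : ℕ} (A A' : Matrix (Fin m) (Fin n) ℚ) (b : Fin m → ℚ)
    (l₁ l₂ : Fin m → ℚ) (hl₁ : ∀ i, 0 ≤ l₁ i) (hl₂ : ∀ i, 0 ≤ l₂ i)
    (h1 : vecMul l₁ A' = 0)
    (h2 : vecMul (l₁ - l₂) A = 0)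
    (h3 : vecMul l₂ (A + A') = 0)
    (h4 : l₂ ⬝ᵥ b < 0) :
    (0 < -(l₂ ⬝ᵥ b)) ∧
    (∀ x x' : Fin n → ℚ, A *ᵥ x + A' *ᵥ x' ≤ b →
      (l₂ ⬝ᵥ (A' *ᵥ x)) - (l₂ ⬝ᵥ (A' *ᵥ x')) ≥ -(l₂ ⬝ᵥ b) ∧
      (l₂ ⬝ᵥ (A' *ᵥ x)) ≥ -(l₁ ⬝ᵥ b)) ∧
    ¬ ∃ seq : ℕ → (Fin n → ℚ), ∀ k : ℕ, A *ᵥ seq k + A' *ᵥ seq (k + 1) ≤ b := by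
  have mono : ∀ (l u v : Fin m → ℚ), (∀ i, 0 ≤ l i) → u ≤ v → l ⬝ᵥ u ≤ l ⬝ᵥ v := by
    intro l u v hl huv
    exact Finset.sum_le_sum fun i _ => mul_le_mul_of_nonneg_left (huv i) (hl i)
  have h3' : vecMul l₂ A = - vecMul l₂ A' := by
    have := h3
    rw [vecMul_add] at this
    linear_combination (norm := module) this
  have h2' : vecMul l₁ A = vecMul l₂ A := by
    have := h2
    rw [sub_vecMul] at this
    linear_combination (norm := module) this
  have key : ∀ x x' : Fin n → ℚ, A *ᵥ x + A' *ᵥ x' ≤ b →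
      (l₂ ⬝ᵥ (A' *ᵥ x)) - (l₂ ⬝ᵥ (A' *ᵥ x')) ≥ -(l₂ ⬝ᵥ b) ∧
      (l₂ ⬝ᵥ (A' *ᵥ x)) ≥ -(l₁ ⬝ᵥ b) := by
    intro x x' hxx'
    constructor
    · have hd : l₂ ⬝ᵥ (A *ᵥ x + A' *ᵥ x') ≤ l₂ ⬝ᵥ b := mono _ _ _ hl₂ hxx'
      rw [dotProduct_add, dotProduct_mulVec, h3'] at hd
      simp only [neg_dotProduct] at hd
      rw [← dotProduct_mulVec] at hd
      linarith
    · have hd : l₁ ⬝ᵥ (A *ᵥ x + A' *ᵥ x') ≤ l₁ ⬝ᵥ b := mono _ _ _ hl₁ hxx'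
      rw [dotProduct_add, dotProduct_mulVec, dotProduct_mulVec, h1, h2', h3'] at hd
      simp only [zero_dotProduct, neg_dotProduct] at hd
      rw [← dotProduct_mulVec] at hd
      linarith
  refine ⟨by linarith, key, ?_⟩
  rintro ⟨seq, hseq⟩
  set f : ℕ → ℚ := fun k => l₂ ⬝ᵥ (A' *ᵥ seq k) with hf
  set δ : ℚ := -(l₂ ⬝ᵥ b) with hδ
  have hδpos : 0 < δ := by simp [hδ]; linarith
  have hdec : ∀ k, f (k + 1) ≤ f k - δ := by
    intro k
    have := (key (seq k) (seq (k+1)) (hseq k)).1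
    simp only [hf, hδ]
    linarith
  have hlb : ∀ k, -(l₁ ⬝ᵥ b) ≤ f k := by
    intro k
    exact (key (seq k) (seq (k+1)) (hseq k)).2
  have hbnd : ∀ k, f k ≤ f 0 - k * δ := by
    intro k
    induction k with
    | zero => simp
    | succ k ih =>
      have := hdec k
      push_cast
      linarith
  obtain ⟨k, hk⟩ := exists_nat_gt ((f 0 + (l₁ ⬝ᵥ b)) / δ)
  have : f 0 + (l₁ ⬝ᵥ b) < k * δ := by
    rw [div_lt_iff₀ hδpos] at hk
    linarith
  have := hbnd k
  have := hlb k
  linarith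
end

section
/- (Affine Farkas lemma) Let P = {x ∈ ℚⁿ : C x + d ≥ 0} be a nonempty polyhedron. An affine function f(x) = cᵀx + c₀ is nonnegative at every point of P if and only if there exist λ₀ ≥ 0 and a nonnegative vector λ such that f(x) = λ₀ + λᵀ(C x + d) for all x (i.e., cᵀ = λᵀC and c₀ = λ₀ + λᵀd). -/
open Matrix

lemma farkas_cone : ∀ (m : ℕ) {n : ℕ} (a : Fin m → Fin n → ℚ) (b : Fin n → ℚ),
    (¬ ∃ l : Fin m → ℚ, (∀ i, 0 ≤ l i) ∧ ∑ i, l i • a i = b) →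
    ∃ x : Fin n → ℚ, (∀ i, 0 ≤ a i ⬝ᵥ x) ∧ b ⬝ᵥ x < 0 := by
  intro m
  induction m with
  | zero =>
    intro n a b h
    have hb : b ≠ 0 := by
      intro hb
      exact h ⟨0, fun i => le_refl _, by simp [hb.symm]⟩
    refine ⟨-b, fun i => i.elim0, ?_⟩
    have : 0 < b ⬝ᵥ b := lt_of_le_of_ne (Finset.sum_nonneg fun i _ => mul_self_nonneg _)
      (fun e => hb (dotProduct_self_eq_zero.mp e.symm))
    simp [dotProduct_neg]
    linarith
  | succ m ih =>
    intro n a b h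
    set a' : Fin m → Fin n → ℚ := fun i => a i.castSucc with ha'
    set aL : Fin n → ℚ := a (Fin.last m) with haL
    have h1 : ¬ ∃ l : Fin m → ℚ, (∀ i, 0 ≤ l i) ∧ ∑ i, l i • a' i = b := by
      rintro ⟨l, hl, hs⟩
      refine h ⟨Fin.snoc l 0, ?_, ?_⟩
      · intro i
        refine Fin.lastCases ?_ ?_ i <;> simp [Fin.snoc_castSucc]
        exact hl
      · rw [Fin.sum_univ_castSucc]
        simpa using hs
    obtain ⟨x, hx, hbx⟩ := ih a' b h1
    by_cases hγ : 0 ≤ aL ⬝ᵥ x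
    · exact ⟨x, fun i => Fin.lastCases hγ hx i, hbx⟩
    push_neg at hγ
    set γ : ℚ := aL ⬝ᵥ x with hγdef
    set α : Fin m → ℚ := fun i => a' i ⬝ᵥ x with hα
    set β : ℚ := b ⬝ᵥ x with hβ
    have hαnn : ∀ i, 0 ≤ α i := hx
    set a'' : Fin m → Fin n → ℚ := fun i => (-γ) • a' i + α i • aL with ha''
    set b'' : Fin n → ℚ := (-γ) • b + β • aL with hb''
    have h2 : ¬ ∃ l : Fin m → ℚ, (∀ i, 0 ≤ l i) ∧ ∑ i, l i • a'' i = b'' := by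
      rintro ⟨l, hl, hs⟩
      set μ : ℚ := ((∑ i, l i * α i) - β) / (-γ) with hμ
      have hsumnn : 0 ≤ ∑ i, l i * α i :=
        Finset.sum_nonneg fun i _ => mul_nonneg (hl i) (hαnn i)
      have hμpos : 0 < μ := div_pos (by linarith) (by linarith)
      -- rearrange hs : ∑ l i • ((-γ) • a' i + α i • aL) = (-γ) • b + β • aL
      have hs' : (-γ) • (∑ i, l i • a' i) + (∑ i, l i * α i) • aL = (-γ) • b + β • aL := by
        rw [← hb'', ← hs, Finset.smul_sum, Finset.sum_smul, ← Finset.sum_add_distrib]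
        refine Finset.sum_congr rfl fun i _ => ?_
        rw [ha'']
        simp [smul_add, smul_smul, mul_comm]
      have key : ∑ i, l i • a' i = b + (-μ) • aL := by
        have hγne : (-γ) ≠ 0 := by linarith
        have := hs'
        funext j
        have hj := congrFun this j
        simp only [Pi.add_apply, Pi.smul_apply, smul_eq_mul, Finset.sum_apply] at hj ⊢
        rw [hμ]
        have hγ0 : γ ≠ 0 := ne_of_lt hγ
        field_simp
        linear_combination -hj
      refine h ⟨Fin.snoc l μ, ?_, ?_⟩
      · intro i
        refine Fin.lastCases ?_ ?_ i <;> simp [Fin.snoc_castSucc]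
        · exact le_of_lt hμpos
        · exact hl
      · rw [Fin.sum_univ_castSucc]
        simp only [Fin.snoc_castSucc, Fin.snoc_last]
        rw [key]
        module
    obtain ⟨y, hy, hby⟩ := ih a'' b'' h2
    set z : Fin n → ℚ := (-γ) • y + (aL ⬝ᵥ y) • x with hz
    refine ⟨z, ?_, ?_⟩
    · intro i
      refine Fin.lastCases ?_ ?_ i
      · have : aL ⬝ᵥ z = 0 := by
          simp [hz, dotProduct_add, dotProduct_smul, smul_eq_mul]
          ring
        rw [← haL] at *
        simp [this]
      · intro i
        have : a' i ⬝ᵥ z = a'' i ⬝ᵥ y := by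
          simp [hz, ha'', dotProduct_add, dotProduct_smul, add_dotProduct, smul_dotProduct,
            smul_eq_mul, hα]
          ring
        have h3 := hy i
        rw [← ha'] at *
        change 0 ≤ a' i ⬝ᵥ z
        simpa [this] using h3
    · have : b ⬝ᵥ z = b'' ⬝ᵥ y := by
        simp [hz, hb'', dotProduct_add, dotProduct_smul, add_dotProduct, smul_dotProduct,
          smul_eq_mul, hβ]
        ring
      simpa [this] using hby


lemma snoc_dot {n : ℕ} (u : Fin n → ℚ) (s : ℚ) (z : Fin (n+1) → ℚ) :
    Fin.snoc u s ⬝ᵥ z = u ⬝ᵥ (fun j => z j.castSucc) + s * z (Fin.last n) := by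
  simp [dotProduct, Fin.sum_univ_castSucc]

/-- Affine form of Farkas' lemma: an affine function `x ↦ cᵀx + c₀` is nonnegative
on a nonempty polyhedron `{x : Cx + d ≥ 0}` iff it is a positive affine combination
of the constraints: `c = λᵀC` and `c₀ = λ₀ + λᵀd` for some `λ₀ ≥ 0`, `λ ≥ 0`. -/
theorem stmt_10 {m n : ℕ} (C : Matrix (Fin m) (Fin n) ℚ) (d : Fin m → ℚ)
    (hne : ∃ x : Fin n → ℚ, 0 ≤ C *ᵥ x + d)
    (c : Fin n → ℚ) (c₀ : ℚ) :
    (∀ x : Fin n → ℚ, 0 ≤ C *ᵥ x + d → 0 ≤ c ⬝ᵥ x + c₀) ↔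
    ∃ (l₀ : ℚ) (l : Fin m → ℚ), 0 ≤ l₀ ∧ (∀ i, 0 ≤ l i) ∧
      c = vecMul l C ∧ c₀ = l₀ + l ⬝ᵥ d := by
  constructor
  · intro hpos
    set a : Fin (m+1) → Fin (n+1) → ℚ :=
      fun i => Fin.lastCases (Fin.snoc 0 1) (fun i => Fin.snoc (C i) (d i)) i with ha
    set bvec : Fin (n+1) → ℚ := Fin.snoc c c₀ with hbvec
    have H : ∃ L : Fin (m+1) → ℚ, (∀ i, 0 ≤ L i) ∧ ∑ i, L i • a i = bvec := by
      by_contra hno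
      obtain ⟨z, hz, hbz⟩ := farkas_cone (m+1) a bvec hno
      set x : Fin n → ℚ := fun j => z j.castSucc with hxdef
      set y : ℚ := z (Fin.last n) with hydef
      have hzi : ∀ i : Fin m, 0 ≤ C i ⬝ᵥ x + d i * y := by
        intro i
        have := hz i.castSucc
        simp only [ha, Fin.lastCases_castSucc] at this
        rwa [snoc_dot] at this
      have hy : 0 ≤ y := by
        have := hz (Fin.last m)
        simp only [ha, Fin.lastCases_last] at this
        rw [snoc_dot] at this
        simpa using this
      have hbz' : c ⬝ᵥ x + c₀ * y < 0 := by
        rwa [hbvec, snoc_dot] at hbz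
      rcases eq_or_lt_of_le hy with hy0 | hy0
      · -- y = 0 : recession direction
        rw [← hy0] at hzi hbz'
        simp only [mul_zero, add_zero] at hzi hbz'
        obtain ⟨x₀, hx₀⟩ := hne
        have hv : 0 ≤ c ⬝ᵥ x₀ + c₀ := hpos x₀ hx₀
        set v : ℚ := c ⬝ᵥ x₀ + c₀ with hv'
        set t : ℚ := (v + 1) / (-(c ⬝ᵥ x)) with ht
        have hcx : c ⬝ᵥ x < 0 := hbz'
        have htpos : 0 < t := div_pos (by linarith) (by linarith)
        have hmem : 0 ≤ C *ᵥ (x₀ + t • x) + d := by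
          intro j
          have h1 := hx₀ j
          have h2 := hzi j
          simp only [Pi.add_apply, Pi.zero_apply, Pi.le_def, mulVec_add, mulVec_smul,
            Pi.smul_apply, smul_eq_mul] at h1 ⊢
          have : (C *ᵥ x) j = C j ⬝ᵥ x := rfl
          rw [this]
          nlinarith [mul_nonneg (le_of_lt htpos) h2]
        have := hpos (x₀ + t • x) hmem
        rw [dotProduct_add, dotProduct_smul] at this
        have hcxne : c ⬝ᵥ x ≠ 0 := ne_of_lt hcx
        have htval : t * (c ⬝ᵥ x) = -(v + 1) := by
          rw [ht, div_mul_eq_mul_div, div_eq_iff (neg_ne_zero.mpr hcxne)]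
          ring
        simp only [smul_eq_mul] at this
        rw [htval] at this
        rw [hv'] at this
        linarith
      · -- y > 0 : scale
        have hyne : y ≠ 0 := ne_of_gt hy0
        have hmem : 0 ≤ C *ᵥ (y⁻¹ • x) + d := by
          intro j
          have h2 := hzi j
          have hxj : (C *ᵥ (y⁻¹ • x) + d) j = y⁻¹ * (C j ⬝ᵥ x + d j * y) := by
            simp only [Pi.add_apply, mulVec_smul, Pi.smul_apply, smul_eq_mul]
            have : (C *ᵥ x) j = C j ⬝ᵥ x := rfl
            rw [this]
            field_simp
          simp only [Pi.zero_apply]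
          rw [hxj]
          exact mul_nonneg (inv_nonneg.mpr hy) h2
        have := hpos (y⁻¹ • x) hmem
        rw [dotProduct_smul] at this
        simp only [smul_eq_mul] at this
        have : 0 ≤ y * (y⁻¹ * (c ⬝ᵥ x)) + y * c₀ := by
          have hy' := le_of_lt hy0
          nlinarith
        rw [← mul_assoc, mul_inv_cancel₀ (ne_of_gt hy0), one_mul] at this
        linarith [hbz', this]
    obtain ⟨L, hL, hsum⟩ := H
    refine ⟨L (Fin.last m), fun i => L i.castSucc, hL _, fun i => hL _, ?_, ?_⟩
    · funext j
      have := congrFun hsum j.castSucc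
      rw [Fin.sum_univ_castSucc] at this
      simp only [Finset.sum_apply, Pi.add_apply, Pi.smul_apply, smul_eq_mul, ha, hbvec,
        Fin.lastCases_castSucc, Fin.lastCases_last, Fin.snoc_castSucc] at this
      simp only [Pi.zero_apply, mul_zero, add_zero] at this
      rw [vecMul]
      simp only [dotProduct]
      rw [← this]
    · have := congrFun hsum (Fin.last n)
      rw [Fin.sum_univ_castSucc] at this
      simp only [Finset.sum_apply, Pi.add_apply, Pi.smul_apply, smul_eq_mul, ha, hbvec,
        Fin.lastCases_castSucc, Fin.lastCases_last, Fin.snoc_last] at this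
      simp only [mul_one] at this
      rw [dotProduct, ← this]
      ring
  · rintro ⟨l₀, l, hl₀, hl, hc, hc₀⟩ x hx
    have h1 : c ⬝ᵥ x = l ⬝ᵥ (C *ᵥ x) := by rw [hc, ← dotProduct_mulVec]
    have h2 : 0 ≤ l ⬝ᵥ (C *ᵥ x + d) :=
      Finset.sum_nonneg fun i _ => mul_nonneg (hl i) (hx i)
    rw [dotProduct_add] at h2
    rw [h1, hc₀]
    linarith
end

section
/- (Completeness direction of PR via Farkas) Let A x + A' x' ≤ b define a nonempty polyhedron in ℚ^{2n}, and suppose f(x) = μᵀx + μ₀ is an affine function such that for all (x, x') in the polyhedron, f(x) ≥ 0 and f(x) − f(x') ≥ 1. Then there exist nonnegative vectors λ₁, λ₂ satisfying λ₁ᵀA' = 0, (λ₁ᵀ − λ₂ᵀ)A = 0, λ₂ᵀ(A+A') = 0 and λ₂ᵀb < 0, with moreover λ₂ᵀA' = h μᵀ for some h > 0 and λ₁ᵀb related to μ₀. (The affine form of Farkas' lemma may be assumed.) -/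
open Matrix Finset

lemma cone_farkas {α : Type} [Fintype α] :
    ∀ (m : ℕ) (v : Fin m → α → ℚ) (b : α → ℚ),
    (¬ ∃ lam : Fin m → ℚ, (∀ i, 0 ≤ lam i) ∧ ∑ i, lam i • v i = b) →
    ∃ u : α → ℚ, (∀ i, 0 ≤ u ⬝ᵥ v i) ∧ u ⬝ᵥ b < 0 := by
  intro m
  induction m with
  | zero =>
    intro v b hb
    have hbne : b ≠ 0 := by
      intro h
      exact hb ⟨0, fun i => le_rfl, by simp [h]⟩
    refine ⟨-b, fun i => i.elim0, ?_⟩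
    have hnn : 0 ≤ b ⬝ᵥ b := Finset.sum_nonneg fun i _ => mul_self_nonneg (b i)
    have h2 : 0 < b ⬝ᵥ b :=
      lt_of_le_of_ne hnn (fun h => hbne (dotProduct_self_eq_zero.mp h.symm))
    simpa [neg_dotProduct] using h2
  | succ m IH =>
    intro v b hnc
    have hside1 : ¬ ∃ lam : Fin m → ℚ, (∀ i, 0 ≤ lam i) ∧
        ∑ i, lam i • v i.castSucc = b := by
      rintro ⟨lam, hlam, hsum⟩
      refine hnc ⟨Fin.snoc lam 0, ?_, ?_⟩
      · intro i
        refine Fin.lastCases ?_ (fun i => ?_) i <;> simp [hlam]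
      · rw [Fin.sum_univ_castSucc]
        simpa using hsum
    obtain ⟨u, hu, hub⟩ := IH (fun i => v i.castSucc) b hside1
    rcases le_or_gt 0 (u ⬝ᵥ v (Fin.last m)) with hpos | hneg
    · exact ⟨u, fun i => Fin.lastCases hpos hu i, hub⟩
    set w := v (Fin.last m) with hwdef
    have hwne : u ⬝ᵥ w ≠ 0 := ne_of_lt hneg
    set p : (α → ℚ) → (α → ℚ) := fun z => z - ((u ⬝ᵥ z) / (u ⬝ᵥ w)) • w with hp
    have hside2 : ¬ ∃ lam : Fin m → ℚ, (∀ i, 0 ≤ lam i) ∧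
        ∑ i, lam i • p (v i.castSucc) = p b := by
      rintro ⟨lam, hlam, hsum⟩
      set c : ℚ := (u ⬝ᵥ b - ∑ i, lam i * (u ⬝ᵥ v i.castSucc)) / (u ⬝ᵥ w) with hc
      have hc0 : 0 ≤ c := by
        have hnum : 0 ≤ ∑ i, lam i * (u ⬝ᵥ v i.castSucc) :=
          Finset.sum_nonneg fun i _ => mul_nonneg (hlam i) (hu i)
        exact div_nonneg_iff.mpr (Or.inr ⟨by linarith, le_of_lt hneg⟩)
      refine hnc ⟨Fin.snoc lam c, ?_, ?_⟩
      · intro i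
        refine Fin.lastCases ?_ (fun i => ?_) i <;> simp [hlam, hc0]
      · rw [Fin.sum_univ_castSucc]
        simp only [Fin.snoc_castSucc, Fin.snoc_last]
        have hsum' : ∑ i, lam i • v i.castSucc
            - (∑ i, lam i * ((u ⬝ᵥ v i.castSucc) / (u ⬝ᵥ w))) • w
            = b - ((u ⬝ᵥ b) / (u ⬝ᵥ w)) • w := by
          have hthis := hsum
          simp only [hp] at hthis
          rw [Finset.sum_smul, ← Finset.sum_sub_distrib, ← hthis]
          exact Finset.sum_congr rfl fun i _ => by rw [smul_sub, smul_smul]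
        have hcoef : c = (u ⬝ᵥ b) / (u ⬝ᵥ w) - ∑ i, lam i * ((u ⬝ᵥ v i.castSucc) / (u ⬝ᵥ w)) := by
          rw [hc, sub_div]
          congr 1
          rw [Finset.sum_div]
          congr 1; ext i; ring
        rw [hcoef, ← hwdef]
        linear_combination (norm := module) hsum'
    obtain ⟨u', hu', hub'⟩ := IH (fun i => p (v i.castSucc)) (p b) hside2
    refine ⟨u' - ((u' ⬝ᵥ w) / (u ⬝ᵥ w)) • u, ?_, ?_⟩
    · have key : ∀ z, (u' - ((u' ⬝ᵥ w) / (u ⬝ᵥ w)) • u) ⬝ᵥ z = u' ⬝ᵥ p z := by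
        intro z
        simp only [hp, sub_dotProduct, dotProduct_sub, smul_dotProduct, dotProduct_smul,
          smul_eq_mul]
        ring
      intro i
      refine Fin.lastCases ?_ (fun i => ?_) i
      · rw [key]
        have : p w = 0 := by simp [hp, div_self hwne]
        rw [this, dotProduct_zero]
      · rw [key]; exact hu' i
    · have key : (u' - ((u' ⬝ᵥ w) / (u ⬝ᵥ w)) • u) ⬝ᵥ b = u' ⬝ᵥ p b := by
        simp only [hp, sub_dotProduct, dotProduct_sub, smul_dotProduct, dotProduct_smul,
          smul_eq_mul]
        ring
      rw [key]; exact hub'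
lemma affineFarkas2 {m n : ℕ} (A A' : Matrix (Fin m) (Fin n) ℚ) (b : Fin m → ℚ)
    (hne : ∃ x x' : Fin n → ℚ, A *ᵥ x + A' *ᵥ x' ≤ b)
    (c c' : Fin n → ℚ) (δ : ℚ)
    (hb : ∀ x x' : Fin n → ℚ, A *ᵥ x + A' *ᵥ x' ≤ b → c ⬝ᵥ x + c' ⬝ᵥ x' ≤ δ)
    (cone_farkas : ∀ (M : ℕ) (v : Fin M → (Fin n ⊕ (Fin n ⊕ Unit)) → ℚ)
      (q : (Fin n ⊕ (Fin n ⊕ Unit)) → ℚ),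
      (¬ ∃ lam : Fin M → ℚ, (∀ i, 0 ≤ lam i) ∧ ∑ i, lam i • v i = q) →
      ∃ u, (∀ i, 0 ≤ u ⬝ᵥ v i) ∧ u ⬝ᵥ q < 0) :
    ∃ y : Fin m → ℚ, (∀ i, 0 ≤ y i) ∧ vecMul y A = c ∧ vecMul y A' = c' ∧ y ⬝ᵥ b ≤ δ := by
  classical
  set v : Fin (m + 1) → (Fin n ⊕ (Fin n ⊕ Unit)) → ℚ :=
    Fin.snoc (fun i => Sum.elim (A i) (Sum.elim (A' i) fun _ => b i))
      (Sum.elim 0 (Sum.elim 0 fun _ => 1)) with hv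
  set q : (Fin n ⊕ (Fin n ⊕ Unit)) → ℚ := Sum.elim c (Sum.elim c' fun _ => δ) with hq
  have hcone : ∃ lam : Fin (m + 1) → ℚ, (∀ i, 0 ≤ lam i) ∧ ∑ i, lam i • v i = q := by
    by_contra hnc
    obtain ⟨u, hu, huq⟩ := cone_farkas (m + 1) v q hnc
    set z : Fin n → ℚ := fun j => u (Sum.inl j) with hz
    set z' : Fin n → ℚ := fun j => u (Sum.inr (Sum.inl j)) with hz'
    set τ : ℚ := u (Sum.inr (Sum.inr ())) with hτ
    have hdot : ∀ (f : Fin n → ℚ) (g : Fin n → ℚ) (r : ℚ),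
        u ⬝ᵥ Sum.elim f (Sum.elim g fun _ => r) = z ⬝ᵥ f + z' ⬝ᵥ g + τ * r := by
      intro f g r
      simp [dotProduct, Fintype.sum_sum_type, add_assoc, hz, hz', hτ]
    have hui : ∀ i : Fin m, 0 ≤ z ⬝ᵥ A i + z' ⬝ᵥ A' i + τ * b i := by
      intro i
      have := hu i.castSucc
      rwa [hv, Fin.snoc_castSucc, hdot] at this
    have hτ0 : 0 ≤ τ := by
      have := hu (Fin.last m)
      rwa [hv, Fin.snoc_last, hdot, dotProduct_zero, dotProduct_zero, mul_one,
        zero_add, zero_add] at this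
    have hq' : z ⬝ᵥ c + z' ⬝ᵥ c' + τ * δ < 0 := by rwa [hq, hdot] at huq
    rcases eq_or_lt_of_le hτ0 with hτz | hτpos
    · -- τ = 0
      obtain ⟨x₀, x₀', hfeas⟩ := hne
      have hzc : z ⬝ᵥ c + z' ⬝ᵥ c' < 0 := by rw [← hτz] at hq'; linarith
      set s : ℚ := -(z ⬝ᵥ c + z' ⬝ᵥ c') with hs
      have hs0 : 0 < s := by simp [hs]; linarith
      set t : ℚ := max ((δ + 1 - (c ⬝ᵥ x₀ + c' ⬝ᵥ x₀')) / s) 0 with ht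
      have ht0 : 0 ≤ t := le_max_right _ _
      have hts : δ + 1 - (c ⬝ᵥ x₀ + c' ⬝ᵥ x₀') ≤ t * s := by
        rw [← div_le_iff₀ hs0]
        exact le_max_left _ _
      have hfeas' : A *ᵥ (x₀ - t • z) + A' *ᵥ (x₀' - t • z') ≤ b := by
        intro i
        have h1 : (A *ᵥ (x₀ - t • z) + A' *ᵥ (x₀' - t • z')) i
            = (A *ᵥ x₀ + A' *ᵥ x₀') i - t * (z ⬝ᵥ A i + z' ⬝ᵥ A' i) := by
          simp [mulVec, dotProduct_sub, dotProduct_smul, smul_eq_mul,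
            dotProduct_comm (A i) z, dotProduct_comm (A' i) z']
          ring
        have h2 : 0 ≤ z ⬝ᵥ A i + z' ⬝ᵥ A' i := by have := hui i; rw [← hτz] at this; linarith
        have := hfeas i
        rw [h1]
        nlinarith [mul_nonneg ht0 h2]
      have hobj := hb _ _ hfeas'
      have h3 : c ⬝ᵥ (x₀ - t • z) + c' ⬝ᵥ (x₀' - t • z')
          = (c ⬝ᵥ x₀ + c' ⬝ᵥ x₀') + t * s := by
        simp [dotProduct_sub, dotProduct_smul, smul_eq_mul, hs,
          dotProduct_comm c z, dotProduct_comm c' z']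
        ring
      rw [h3] at hobj
      linarith
    · -- τ > 0
      have hfeas' : A *ᵥ ((-(1/τ)) • z) + A' *ᵥ ((-(1/τ)) • z') ≤ b := by
        intro i
        have h1 : (A *ᵥ ((-(1/τ)) • z) + A' *ᵥ ((-(1/τ)) • z')) i
            = (1/τ) * (-(z ⬝ᵥ A i + z' ⬝ᵥ A' i)) := by
          simp [mulVec, dotProduct_smul, smul_eq_mul,
            dotProduct_comm (A i) z, dotProduct_comm (A' i) z']
          ring
        have h2 : -(z ⬝ᵥ A i + z' ⬝ᵥ A' i) ≤ τ * b i := by have := hui i; linarith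
        rw [h1]
        calc (1/τ) * (-(z ⬝ᵥ A i + z' ⬝ᵥ A' i)) ≤ (1/τ) * (τ * b i) :=
              mul_le_mul_of_nonneg_left h2 (by positivity)
          _ = b i := by field_simp
      have hobj := hb _ _ hfeas'
      have h3 : c ⬝ᵥ ((-(1/τ)) • z) + c' ⬝ᵥ ((-(1/τ)) • z')
          = (1/τ) * (-(z ⬝ᵥ c + z' ⬝ᵥ c')) := by
        simp [dotProduct_smul, smul_eq_mul, dotProduct_comm c z, dotProduct_comm c' z']
        ring
      rw [h3] at hobj
      have h4 : τ * δ < -(z ⬝ᵥ c + z' ⬝ᵥ c') := by linarith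
      have h5 : (1/τ) * (τ * δ) < (1/τ) * (-(z ⬝ᵥ c + z' ⬝ᵥ c')) := by
        exact mul_lt_mul_of_pos_left h4 (by positivity)
      have h6 : (1/τ) * (τ * δ) = δ := by field_simp
      linarith
  obtain ⟨lam, hlam, hsum⟩ := hcone
  refine ⟨fun i => lam i.castSucc, fun i => hlam _, ?_, ?_, ?_⟩
  · ext j
    have := congrFun hsum (Sum.inl j)
    rw [Finset.sum_apply, Fin.sum_univ_castSucc] at this
    simpa [hv, hq, vecMul, dotProduct] using this
  · ext j
    have := congrFun hsum (Sum.inr (Sum.inl j))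
    rw [Finset.sum_apply, Fin.sum_univ_castSucc] at this
    simpa [hv, hq, vecMul, dotProduct] using this
  · have := congrFun hsum (Sum.inr (Sum.inr ()))
    rw [Finset.sum_apply, Fin.sum_univ_castSucc] at this
    simp only [hv, hq, Fin.snoc_castSucc, Fin.snoc_last, Pi.smul_apply, Sum.elim_inr,
      smul_eq_mul, mul_one] at this
    have hb' : (fun i => lam i.castSucc) ⬝ᵥ b = ∑ i : Fin m, lam i.castSucc * b i := rfl
    rw [hb']
    have hlast := hlam (Fin.last m)
    linarith [this.symm.le]

/-- Completeness direction of the Podelski–Rybalchenko method via Farkas' lemma: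
if the polyhedron `A x + A' x' ≤ b` is nonempty and `f x = μᵀx + μ₀` is an affine
function with `f x ≥ 0` and `f x − f x' ≥ 1` on the polyhedron, then there exist
nonnegative `λ₁, λ₂` satisfying the PR conditions, with `λ₂ᵀA' = h μᵀ` for some
`h > 0` and `λ₁ᵀb ≤ h μ₀`. -/
theorem stmt_13 {m n : ℕ} (A A' : Matrix (Fin m) (Fin n) ℚ) (b : Fin m → ℚ)
    (hne : ∃ x x' : Fin n → ℚ, A *ᵥ x + A' *ᵥ x' ≤ b)
    (μ : Fin n → ℚ) (μ₀ : ℚ)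
    (hrank : ∀ x x' : Fin n → ℚ, A *ᵥ x + A' *ᵥ x' ≤ b →
      0 ≤ μ ⬝ᵥ x + μ₀ ∧ (μ ⬝ᵥ x) - (μ ⬝ᵥ x') ≥ 1) :
    ∃ l₁ l₂ : Fin m → ℚ, (∀ i, 0 ≤ l₁ i) ∧ (∀ i, 0 ≤ l₂ i) ∧
      vecMul l₁ A' = 0 ∧ vecMul (l₁ - l₂) A = 0 ∧
      vecMul l₂ (A + A') = 0 ∧ l₂ ⬝ᵥ b < 0 ∧
      ∃ h : ℚ, 0 < h ∧ vecMul l₂ A' = h • μ ∧ l₁ ⬝ᵥ b ≤ h * μ₀ := by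
  obtain ⟨l₁, hl₁0, hl₁A, hl₁A', hl₁b⟩ :=
    affineFarkas2 A A' b hne (-μ) 0 μ₀
      (fun x x' hx => by
        have := (hrank x x' hx).1
        simp only [neg_dotProduct, zero_dotProduct]
        linarith)
      (fun M v q => cone_farkas M v q)
  obtain ⟨l₂, hl₂0, hl₂A, hl₂A', hl₂b⟩ :=
    affineFarkas2 A A' b hne (-μ) μ (-1)
      (fun x x' hx => by
        have := (hrank x x' hx).2
        simp only [neg_dotProduct]
        linarith [dotProduct_comm μ x', dotProduct_comm μ x])
      (fun M v q => cone_farkas M v q)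
  refine ⟨l₁, l₂, hl₁0, hl₂0, hl₁A', ?_, ?_, by linarith, 1, one_pos, ?_, ?_⟩
  · rw [sub_vecMul, hl₁A, hl₂A, sub_self]
  · rw [vecMul_add, hl₂A, hl₂A', neg_add_cancel]
  · rw [hl₂A', one_smul]
  · rw [one_mul]; exact hl₁b
end
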